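/- For the cubic prepotential C = C_{ijk}y^iy^jy^k with symmetric coefficients C_{ijk} on a region where the matrix g_{ij} = (9/4)C_iC_j/C² − (3/2)C_{ij}/C is invertible (C_i = C_{ijk}y^jy^k, C_{ij} = C_{ijk}y^k, C > 0), the inverse matrix is given by g^{ij} = 2y^iy^j − (2/3)C·C^{ij}, where C^{ij} is the inverse of C_{ij}. That is, ((9/4)C_iC_k/C² − (3/2)C_{ik}/C)(2y^ky^j − (2/3)C·C^{kj}) = δ_i^j. -/
import Mathlib


open Finset in
/-- For a cubic prepotential `C = C_{ijk} yⁱ yʲ yᵏ` with symmetric coefficients, the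
matrix `gⁱʲ = 2yⁱyʲ - (2/3)C Cⁱʲ` is inverse to
`g_{ij} = (9/4)C_iC_j/C² - (3/2)C_{ij}/C`. -/
theorem stmt_12 (n : ℕ) (T : Fin n → Fin n → Fin n → ℝ)
    (hsym₁ : ∀ i j k, T i j k = T j i k) (hsym₂ : ∀ i j k, T i j k = T i k j)
    (y : Fin n → ℝ)
    (C : ℝ) (hC : C = ∑ i, ∑ j, ∑ k, T i j k * y i * y j * y k)
    (hCpos : 0 < C)
    (Ci : Fin n → ℝ) (hCi : ∀ i, Ci i = ∑ j, ∑ k, T i j k * y j * y k)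
    (Cij : Matrix (Fin n) (Fin n) ℝ) (hCij : ∀ i j, Cij i j = ∑ k, T i j k * y k)
    (Cinv : Matrix (Fin n) (Fin n) ℝ)
    (hCinv : Cij * Cinv = 1 ∧ Cinv * Cij = 1)
    (g ginv : Matrix (Fin n) (Fin n) ℝ)
    (hg : ∀ i j, g i j = (9/4) * Ci i * Ci j / C^2 - (3/2) * Cij i j / C)
    (hginv : ∀ i j, ginv i j = 2 * y i * y j - (2/3) * C * Cinv i j) :
    g * ginv = 1 := by
  have hCne : C ≠ 0 := ne_of_gt hCpos
  -- Cij is symmetric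
  have hCijsym : ∀ i j, Cij i j = Cij j i := by
    intro i j
    simp only [hCij]
    exact Finset.sum_congr rfl fun k _ => by rw [hsym₁]
  -- ∑ k, Cij i k * y k = Ci i
  have h1 : ∀ i, ∑ k, Cij i k * y k = Ci i := by
    intro i
    simp only [hCij, hCi, Finset.sum_mul]
    exact Finset.sum_congr rfl fun k _ =>
      Finset.sum_congr rfl fun m _ => by rw [hsym₂]; ring
  -- ∑ k, Ci k * y k = C
  have h2 : ∑ k, Ci k * y k = C := by
    simp only [hCi, hC, Finset.sum_mul]
    exact Finset.sum_congr rfl fun i _ => Finset.sum_congr rfl fun j _ =>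
      Finset.sum_congr rfl fun k _ => by ring
  -- ∑ k, Cij i k * Cinv k j = (1 : Matrix _ _ ℝ) i j
  have h3 : ∀ i j, ∑ k, Cij i k * Cinv k j = (1 : Matrix (Fin n) (Fin n) ℝ) i j := by
    intro i j
    rw [← hCinv.1, Matrix.mul_apply]
  -- ∑ k, Ci k * Cinv k j = y j
  have h4 : ∀ j, ∑ k, Ci k * Cinv k j = y j := by
    intro j
    have : ∀ k, Ci k = ∑ m, Cij m k * y m := by
      intro k
      rw [← h1 k]
      exact Finset.sum_congr rfl fun m _ => by rw [hCijsym]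
    calc ∑ k, Ci k * Cinv k j = ∑ k, ∑ m, Cij m k * y m * Cinv k j := by
          exact Finset.sum_congr rfl fun k _ => by rw [this k, Finset.sum_mul]
      _ = ∑ m, y m * ∑ k, Cij m k * Cinv k j := by
          rw [Finset.sum_comm]
          refine Finset.sum_congr rfl fun m _ => ?_
          rw [Finset.mul_sum]
          exact Finset.sum_congr rfl fun k _ => by ring
      _ = ∑ m, y m * (1 : Matrix (Fin n) (Fin n) ℝ) m j := by
          exact Finset.sum_congr rfl fun m _ => by rw [h3]
      _ = y j := by simp [Matrix.one_apply]
  ext i j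
  rw [Matrix.mul_apply]
  have expand : ∀ k, g i k * ginv k j =
      (9/2) * Ci i / C^2 * y j * (Ci k * y k)
      - (3/2) * Ci i / C * (Ci k * Cinv k j)
      - (3 / C * y j) * (Cij i k * y k)
      + Cij i k * Cinv k j := by
    intro k
    rw [hg, hginv]
    field_simp
    ring
  rw [Finset.sum_congr rfl fun k _ => expand k]
  simp only [Finset.sum_add_distrib, Finset.sum_sub_distrib, ← Finset.mul_sum, h1, h2, h3, h4]
  have hz : (9/2) * Ci i / C^2 * y j * C - (3/2) * Ci i / C * y j - 3 / C * y j * Ci i = 0 := by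
    field_simp
    ring
  rw [hz, zero_add]
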